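/- Let s_1, …, s_{n+1} be exchangeable real random variables, α ∈ (0,1), and let ϑ be the ⌈(1−α)(n+1)⌉-th order statistic of s_1, …, s_n (i.e., the (1−α)(1 + 1/n) empirical quantile of {s_1, …, s_n}, defined as +∞ if ⌈(1−α)(n+1)⌉ > n). Then P(s_{n+1} ≤ ϑ) ≥ 1 − α. -/

import Mathlib

open MeasureTheory Finset

/-- The `k`-th order statistic (1-based) of the values `v 0, …, v (n-1)`, viewed in
`EReal`, defined as `⊤` (i.e. `+∞`) when `k > n`. -/
noncomputable def orderStat (n : ℕ) (v : Fin n → ℝ) (k : ℕ) : EReal :=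
  (((Finset.univ.val.map (fun i => (v i : EReal))).sort (· ≤ ·)).getD (k - 1) ⊤)

open scoped ENNReal

lemma sorted_le_getD_iff {α : Type*} [LinearOrder α] {l : List α} (hl : l.Pairwise (· ≤ ·))
    {d t : α} (hd : t ≤ d) (i : ℕ) :
    t ≤ l.getD i d ↔ l.countP (fun a => decide (a < t)) ≤ i := by
  induction l generalizing i with
  | nil => simpa using hd
  | cons a l ih =>
    rcases List.pairwise_cons.mp hl with ⟨ha, hl'⟩
    cases i with
    | zero =>
      simp only [List.getD_cons_zero, List.countP_cons, Nat.le_zero, Nat.add_eq_zero]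
      rw [List.countP_eq_zero]
      constructor
      · intro h
        refine ⟨fun b hb => ?_, ?_⟩
        · simp [not_lt.mpr (h.trans (ha b hb))]
        · simp [not_lt.mpr h]
      · rintro ⟨-, h2⟩
        simpa using h2
    | succ i =>
      simp only [List.getD_cons_succ, List.countP_cons]
      rw [ih hl']
      by_cases hat : a < t
      · simp only [hat, decide_true, if_true]
        omega
      · have : ∀ b ∈ l, ¬ (b < t) := fun b hb =>
          not_lt.mpr ((not_lt.mp hat).trans (ha b hb))
        rw [List.countP_eq_zero.mpr (by simpa using this)]
        simp [hat]

lemma sorted_lt_countP_le {α : Type*} [LinearOrder α] {l : List α} (hl : l.Pairwise (· ≤ ·))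
    {i : ℕ} (hi : i < l.length) :
    i < l.countP (fun a => decide (a ≤ l.get ⟨i, hi⟩)) := by
  induction l generalizing i with
  | nil => simp at hi
  | cons a l ih =>
    rcases List.pairwise_cons.mp hl with ⟨ha, hl'⟩
    cases i with
    | zero => simp [List.countP_cons]
    | succ i =>
      have hi' : i < l.length := by simpa using hi
      have hget : (a :: l).get ⟨i + 1, hi⟩ = l.get ⟨i, hi'⟩ := rfl
      rw [hget, List.countP_cons]
      have h1 := ih hl' hi'
      have h2 : a ≤ l.get ⟨i, hi'⟩ := ha _ (List.get_mem l _)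
      simp only [h2, decide_true, if_true]
      omega
open Finset



lemma countP_sort_eq {α β : Type*} [LinearOrder α] [Fintype β] [DecidableEq β]
    (v : β → α) (p : α → Prop) [DecidablePred p] :
    ((Finset.univ.val.map v).sort (· ≤ ·)).countP (fun a => decide (p a)) =
      (Finset.univ.filter (fun i => p (v i))).card := by
  have h1 : ((Finset.univ.val.map v).sort (· ≤ ·)).countP (fun a => decide (p a))
      = Multiset.countP p (Finset.univ.val.map v) := by
    conv_rhs => rw [← Multiset.sort_eq (Finset.univ.val.map v) (· ≤ ·),
      Multiset.coe_countP]
  rw [h1, Multiset.countP_map]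
  rfl

lemma le_orderStat_iff {n : ℕ} (v : Fin n → ℝ) (t : ℝ) {k : ℕ} (hk : 1 ≤ k) :
    ((t : EReal) ≤ orderStat n v k) ↔ (Finset.univ.filter fun i => v i < t).card < k := by
  unfold orderStat
  rw [sorted_le_getD_iff (Multiset.pairwise_sort _ _) le_top (k-1),
    countP_sort_eq (fun i => (v i : EReal)) (fun a => a < (t : EReal))]
  have : ∀ i : Fin n, ((v i : EReal) < (t : EReal)) ↔ v i < t := fun i => EReal.coe_lt_coe_iff
  simp only [this]
  omega

lemma card_small_rank {n : ℕ} (x : Fin (n+1) → ℝ) {k : ℕ} (hk1 : 1 ≤ k) (hk2 : k ≤ n+1) :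
    k ≤ (univ.filter fun i => (univ.filter fun j => x j < x i).card < k).card := by
  set l := (Finset.univ.val.map x).sort (· ≤ ·) with hl
  have hsort : l.Pairwise (· ≤ ·) := Multiset.pairwise_sort _ _
  have hlen : l.length = n + 1 := by
    simp [hl, Multiset.length_sort]
  have hk' : k - 1 < l.length := by omega
  set c := l.get ⟨k-1, hk'⟩ with hc
  have h2 : k - 1 < l.countP (fun a => decide (a ≤ c)) := sorted_lt_countP_le hsort hk'
  have h2' : k ≤ (univ.filter fun i => x i ≤ c).card := by
    have := countP_sort_eq x (fun a => a ≤ c)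
    rw [← hl] at this
    omega
  have hgetD : l.getD (k-1) c = c := by
    rw [List.getD_eq_getElem l c hk']
    simp [hc]
  have h1 : (univ.filter fun j => x j < c).card ≤ k - 1 := by
    have := (sorted_le_getD_iff hsort (le_refl c) (k-1)).mp (le_of_eq hgetD.symm)
    have h3 := countP_sort_eq x (fun a => a < c)
    rw [← hl] at h3
    omega
  refine le_trans h2' (Finset.card_le_card ?_)
  intro i hi
  simp only [mem_filter] at hi ⊢
  refine ⟨hi.1, lt_of_le_of_lt (Finset.card_le_card ?_) (show (univ.filter fun j => x j < c).card < k by omega)⟩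
  intro j hj
  simp only [mem_filter] at hj ⊢
  exact ⟨hj.1, lt_of_lt_of_le hj.2 hi.2⟩

/-- If `s₁, …, s_{n+1}` are exchangeable real random variables, `α ∈ (0,1)`,
and `ϑ` is the `⌈(1−α)(n+1)⌉`-th order statistic of `s₁, …, sₙ` (`+∞` if the index exceeds
`n`), then `P(s_{n+1} ≤ ϑ) ≥ 1 − α`. -/
theorem exchangeable_quantile_coverage
    {Ω : Type*} [MeasureSpace Ω] (P : Measure Ω) [IsProbabilityMeasure P]
    (n : ℕ) (s : Fin (n + 1) → Ω → ℝ) (hs : ∀ i, Measurable (s i))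
    (hexch : ∀ σ : Equiv.Perm (Fin (n + 1)),
      Measure.map (fun ω => fun i => s (σ i) ω) P = Measure.map (fun ω => fun i => s i ω) P)
    (α : ℝ) (hα : α ∈ Set.Ioo (0 : ℝ) 1) :
    P {ω | (s (Fin.last n) ω : EReal)
        ≤ orderStat n (fun i => s i.castSucc ω) ⌈(1 - α) * (n + 1)⌉₊}
      ≥ ENNReal.ofReal (1 - α) := by
  obtain ⟨hα0, hα1⟩ := hα
  set k := ⌈(1 - α) * (n + 1)⌉₊ with hkdef
  have h1a : (0:ℝ) < 1 - α := by linarith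
  have hpos : (0:ℝ) < (1 - α) * (n + 1) := by positivity
  have hk1 : 1 ≤ k := Nat.one_le_ceil_iff.mpr hpos
  have hk2 : k ≤ n + 1 := by
    rw [hkdef, Nat.ceil_le]
    push_cast
    nlinarith
  set A : Fin (n+1) → Set Ω :=
    fun i => {ω | (univ.filter fun j => s j ω < s i ω).card < k} with hAdef
  -- rewrite the event
  have hcards : ∀ ω, (univ.filter fun i : Fin n => s i.castSucc ω < s (Fin.last n) ω).card
      = (univ.filter fun j : Fin (n+1) => s j ω < s (Fin.last n) ω).card := by
    intro ω
    rw [Fin.univ_castSuccEmb, Finset.filter_cons, if_neg (lt_irrefl _), Finset.filter_map,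
      Finset.card_map]
    rfl
  have hEvent : {ω | (s (Fin.last n) ω : EReal)
      ≤ orderStat n (fun i => s i.castSucc ω) k} = A (Fin.last n) := by
    ext ω
    simp only [Set.mem_setOf_eq, hAdef]
    rw [le_orderStat_iff _ _ hk1, hcards ω]
  rw [hEvent]
  -- measurability
  have hcardmeas : ∀ i : Fin (n+1), Measurable
      (fun ω => (univ.filter fun j : Fin (n+1) => s j ω < s i ω).card) := by
    intro i
    have : (fun ω => (univ.filter fun j : Fin (n+1) => s j ω < s i ω).card)
        = fun ω => ∑ j : Fin (n+1), if s j ω < s i ω then 1 else 0 := by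
      funext ω; rw [Finset.card_filter]
    rw [this]
    exact Finset.measurable_sum _ fun j _ =>
      Measurable.ite (measurableSet_lt (hs j) (hs i)) measurable_const measurable_const
  have hmeasA : ∀ i, MeasurableSet (A i) := fun i =>
    (hcardmeas i) (MeasurableSet.of_discrete (s := {m | m < k}))
  -- B set
  set Bset : Set (Fin (n+1) → ℝ) :=
    {x | (univ.filter fun j => x j < x (Fin.last n)).card < k} with hBdef
  have hBcardmeas : Measurable
      (fun x : Fin (n+1) → ℝ => (univ.filter fun j : Fin (n+1) => x j < x (Fin.last n)).card) := by
    have : (fun x : Fin (n+1) → ℝ => (univ.filter fun j => x j < x (Fin.last n)).card)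
        = fun x => ∑ j : Fin (n+1), if x j < x (Fin.last n) then 1 else 0 := by
      funext x; rw [Finset.card_filter]
    rw [this]
    exact Finset.measurable_sum _ fun j _ =>
      Measurable.ite (measurableSet_lt (measurable_pi_apply j) (measurable_pi_apply _))
        measurable_const measurable_const
  have hBmeas : MeasurableSet Bset := hBcardmeas (MeasurableSet.of_discrete (s := {m | m < k}))
  have hmapmeas : Measurable (fun ω => fun i => s i ω) := measurable_pi_lambda _ hs
  -- equal probabilities
  have hAeq : ∀ i, P (A i) = P (A (Fin.last n)) := by
    intro i
    set σ := Equiv.swap i (Fin.last n) with hσ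
    have hσmeas : Measurable (fun ω => fun j => s (σ j) ω) :=
      measurable_pi_lambda _ fun j => hs (σ j)
    have h1 : (fun ω => fun j => s (σ j) ω) ⁻¹' Bset = A i := by
      ext ω
      simp only [Set.mem_preimage, hBdef, Set.mem_setOf_eq, hAdef]
      have hσlast : σ (Fin.last n) = i := Equiv.swap_apply_right _ _
      simp only [hσlast]
      have hmap : (univ.filter fun j => s (σ j) ω < s i ω)
          = (univ.filter fun j => s j ω < s i ω).map σ.symm.toEmbedding := by
        ext j
        rw [Finset.mem_map_equiv]
        simp
      rw [hmap, Finset.card_map]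
    have h2 : (fun ω => fun j => s j ω) ⁻¹' Bset = A (Fin.last n) := rfl
    calc P (A i) = Measure.map (fun ω => fun j => s (σ j) ω) P Bset := by
          rw [Measure.map_apply hσmeas hBmeas, h1]
      _ = Measure.map (fun ω => fun j => s j ω) P Bset := by rw [hexch σ]
      _ = P (A (Fin.last n)) := by rw [Measure.map_apply hmapmeas hBmeas, h2]
  -- pointwise counting bound
  have hpoint : ∀ ω, (k:ℝ≥0∞) ≤ ∑ i : Fin (n+1), (A i).indicator (fun _ => (1:ℝ≥0∞)) ω := by
    intro ω
    have hcard := card_small_rank (fun j => s j ω) hk1 hk2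
    have : ∑ i : Fin (n+1), (A i).indicator (fun _ => (1:ℝ≥0∞)) ω
        = ((univ.filter fun i : Fin (n+1) => ω ∈ A i).card : ℝ≥0∞) := by
      rw [Finset.card_filter]
      push_cast
      refine Finset.sum_congr rfl fun i _ => ?_
      by_cases h : ω ∈ A i <;> simp [h, Set.indicator]
    rw [this]
    have hsub : (univ.filter fun i : Fin (n+1) =>
        (univ.filter fun j => s j ω < s i ω).card < k) = univ.filter fun i => ω ∈ A i := rfl
    rw [hsub] at hcard
    exact_mod_cast Nat.cast_le.mpr hcard
  -- integrate
  have hsum : (k:ℝ≥0∞) ≤ ∑ i : Fin (n+1), P (A i) := by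
    calc (k:ℝ≥0∞) = ∫⁻ _, (k:ℝ≥0∞) ∂P := by simp
      _ ≤ ∫⁻ ω, ∑ i : Fin (n+1), (A i).indicator (fun _ => (1:ℝ≥0∞)) ω ∂P :=
          lintegral_mono hpoint
      _ = ∑ i : Fin (n+1), ∫⁻ ω, (A i).indicator (fun _ => (1:ℝ≥0∞)) ω ∂P :=
          lintegral_finset_sum _ fun i _ =>
            measurable_const.indicator (hmeasA i)
      _ = ∑ i : Fin (n+1), P (A i) := by
          refine Finset.sum_congr rfl fun i _ => ?_
          rw [lintegral_indicator (hmeasA i)]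
          simp
  have hsum' : (k:ℝ≥0∞) ≤ (n+1 : ℝ≥0∞) * P (A (Fin.last n)) := by
    calc (k:ℝ≥0∞) ≤ ∑ i : Fin (n+1), P (A i) := hsum
      _ = ∑ _i : Fin (n+1), P (A (Fin.last n)) := Finset.sum_congr rfl fun i _ => hAeq i
      _ = (n+1 : ℝ≥0∞) * P (A (Fin.last n)) := by
          rw [Finset.sum_const, Finset.card_univ, Fintype.card_fin, nsmul_eq_mul]
          push_cast
          ring
  -- final arithmetic
  have hofk : (n+1 : ℝ≥0∞) * ENNReal.ofReal (1 - α) ≤ (k:ℝ≥0∞) := by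
    have h1 : ((n:ℝ) + 1) * (1 - α) ≤ (k:ℝ) := by
      have := Nat.le_ceil ((1 - α) * (n + 1))
      rw [← hkdef] at this
      nlinarith
    calc (n+1 : ℝ≥0∞) * ENNReal.ofReal (1 - α)
        = ENNReal.ofReal (((n:ℝ)+1) * (1 - α)) := by
          rw [ENNReal.ofReal_mul (by positivity)]
          congr 1
          rw [ENNReal.ofReal_add (by positivity) zero_le_one]
          simp
      _ ≤ ENNReal.ofReal (k:ℝ) := ENNReal.ofReal_le_ofReal h1
      _ = (k:ℝ≥0∞) := ENNReal.ofReal_natCast k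
  have hfinal : (n+1 : ℝ≥0∞) * ENNReal.ofReal (1 - α)
      ≤ (n+1 : ℝ≥0∞) * P (A (Fin.last n)) := hofk.trans hsum'
  have hne0 : (n+1 : ℝ≥0∞) ≠ 0 := by simp
  have hnetop : (n+1 : ℝ≥0∞) ≠ ⊤ := by
    simp [ENNReal.add_eq_top]
  exact (ENNReal.mul_le_mul_iff_right hne0 hnetop).mp hfinal
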